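/- Assume ‖V_k^H H_k^H U_k‖_F > 0 for every k, and let P_max > 0 and C > 0. Define D, Ψ, σ_vec as follows: D = diag(L_k² γ_k/‖V_k^H H_k^H U_k‖_F²), Ψ_{kj} = ‖V_k^H H_k^H U_j‖_F²/(L_k L_j) for j ≠ k, Ψ_{kk} = 0, and σ_vec ∈ ℝ^K has every entry σ². Define the (K+1) × (K+1) extended coupling matrix Υ with block form Υ = [[DΨ, Dσ_vec],[(1/P_max) 1^T DΨ, (1/P_max) 1^T Dσ_vec]], where 1 ∈ ℝ^K is the all-ones vector. Then for any vector p ∈ ℝ^K with nonnegative entries, the extended vector (p; 1) ∈ ℝ^{K+1} satisfies Υ (p; 1) = (1/C) (p; 1) if and only if both Σ_{k=1}^K p_k = P_max and SINR̄_k^{grp}(p)/γ_k = C for every k = 1,…,K. -/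

import Mathlib

open Matrix Finset

/-- The squared Frobenius norm `‖X‖_F² = trace(X Xᴴ)` of a complex matrix. -/
noncomputable def frobNormSq {m n : ℕ} (X : Matrix (Fin m) (Fin n) ℂ) : ℝ :=
  ∑ i, ∑ j, ‖X i j‖ ^ 2

/-- The average downlink SINR of user `k` under group power allocation,
where user `k`'s power `pg k` is split evenly among its `L k` streams. -/
noncomputable def groupSINR {K M : ℕ} {N L : Fin K → ℕ}
    (H : ∀ k : Fin K, Matrix (Fin M) (Fin (N k)) ℂ)
    (U : ∀ j : Fin K, Matrix (Fin M) (Fin (L j)) ℂ)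
    (V : ∀ k : Fin K, Matrix (Fin (N k)) (Fin (L k)) ℂ)
    (σsq : ℝ) (pg : Fin K → ℝ) (k : Fin K) : ℝ :=
  (pg k / (L k : ℝ) ^ 2 * frobNormSq ((V k)ᴴ * (H k)ᴴ * U k)) /
    ((∑ j ∈ univ.erase k,
        pg j / ((L j : ℝ) * (L k : ℝ)) * frobNormSq ((V k)ᴴ * (H k)ᴴ * U j)) + σsq)

/-- eigen-system characterization of SINR balancing with full power,
via the extended coupling matrix `Υ`. -/
theorem extended_coupling_eigen_iff_balanced {K M : ℕ} {N L : Fin K → ℕ}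
    (hK : 0 < K) (hL : ∀ k, 1 ≤ L k)
    (H : ∀ k : Fin K, Matrix (Fin M) (Fin (N k)) ℂ)
    (U : ∀ j : Fin K, Matrix (Fin M) (Fin (L j)) ℂ)
    (V : ∀ k : Fin K, Matrix (Fin (N k)) (Fin (L k)) ℂ)
    (σsq : ℝ) (hσ : 0 < σsq)
    (γ : Fin K → ℝ) (hγ : ∀ k, 0 < γ k)
    (hF : ∀ k, 0 < frobNormSq ((V k)ᴴ * (H k)ᴴ * U k))
    (Pmax : ℝ) (hP : 0 < Pmax) (C : ℝ) (hC : 0 < C)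
    (D : Matrix (Fin K) (Fin K) ℝ)
    (hD : D = Matrix.diagonal fun k =>
      (L k : ℝ) ^ 2 * γ k / frobNormSq ((V k)ᴴ * (H k)ᴴ * U k))
    (Ψ : Matrix (Fin K) (Fin K) ℝ)
    (hΨ : Ψ = Matrix.of fun k j =>
      if j = k then 0
      else frobNormSq ((V k)ᴴ * (H k)ᴴ * U j) / ((L k : ℝ) * (L j : ℝ)))
    (σvec : Fin K → ℝ) (hσvec : σvec = fun _ => σsq)
    (Υ : Matrix (Fin K ⊕ Fin 1) (Fin K ⊕ Fin 1) ℝ)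
    (hΥ : Υ = Matrix.fromBlocks (D * Ψ)
      (Matrix.of fun k (_ : Fin 1) => D.mulVec σvec k)
      (Matrix.of fun (_ : Fin 1) j => (1 / Pmax) * ∑ k, (D * Ψ) k j)
      (Matrix.of fun (_ : Fin 1) (_ : Fin 1) => (1 / Pmax) * ∑ k, D.mulVec σvec k))
    (pg : Fin K → ℝ) (hpg : ∀ k, 0 ≤ pg k) :
    Υ.mulVec (Sum.elim pg fun _ => (1 : ℝ)) =
        (1 / C) • Sum.elim pg (fun _ => (1 : ℝ)) ↔
      (∑ k, pg k = Pmax ∧ ∀ k, groupSINR H U V σsq pg k / γ k = C) := by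
  have hLpos : ∀ k, (0:ℝ) < (L k : ℝ) := fun k => by exact_mod_cast hL k
  have hFnn : ∀ k j, 0 ≤ frobNormSq ((V k)ᴴ * (H k)ᴴ * U j) := by
    intro k j; unfold frobNormSq; positivity
  set d : Fin K → ℝ := fun k =>
    (L k : ℝ) ^ 2 * γ k / frobNormSq ((V k)ᴴ * (H k)ᴴ * U k) with hd
  set S : Fin K → ℝ := fun k =>
    ∑ j ∈ univ.erase k,
      pg j / ((L j : ℝ) * (L k : ℝ)) * frobNormSq ((V k)ᴴ * (H k)ᴴ * U j) with hS
  have hSnn : ∀ k, 0 ≤ S k := by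
    intro k
    refine Finset.sum_nonneg fun j _ => ?_
    have h1 := hpg j; have h2 := hFnn k j; have h3 := hLpos j; have h4 := hLpos k
    positivity
  have hdenpos : ∀ k, 0 < S k + σsq := fun k => by have := hSnn k; linarith
  have hdpos : ∀ k, 0 < d k := fun k => by
    have := hF k; have := hγ k; have := hLpos k; positivity
  -- σ-column entries
  have hDσ : ∀ k, D.mulVec σvec k = d k * σsq := by
    intro k
    simp [hD, hσvec, Matrix.mulVec_diagonal]
  -- row sums of D * Ψ against pg
  have hrow : ∀ k, ∑ j, (D * Ψ) k j * pg j = d k * S k := by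
    intro k
    rw [hD, hΨ]
    rw [← Finset.sum_erase (univ : Finset (Fin K))
      (f := fun j => (Matrix.diagonal d * Matrix.of fun k j =>
        if j = k then 0
        else frobNormSq ((V k)ᴴ * (H k)ᴴ * U j) / ((L k : ℝ) * (L j : ℝ))) k j * pg j)
      (a := k) (by simp [Matrix.diagonal_mul])]
    rw [hS, Finset.mul_sum]
    refine Finset.sum_congr rfl fun j hj => ?_
    have hjk : j ≠ k := Finset.ne_of_mem_erase hj
    rw [Matrix.diagonal_mul, Matrix.of_apply, if_neg hjk]
    ring
  -- component computation of the eigen equation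
  rw [hΥ, Matrix.fromBlocks_mulVec, funext_iff]
  rw [Sum.forall]
  simp only [Sum.elim_comp_inl, Sum.elim_comp_inr, Pi.add_apply, Pi.smul_apply,
    Sum.elim_inl, Sum.elim_inr, smul_eq_mul]
  have hx1 : ∀ k, Matrix.mulVec (Matrix.of fun k (_ : Fin 1) => D.mulVec σvec k)
      (fun _ => (1:ℝ)) k = d k * σsq := by
    intro k
    simp only [Matrix.mulVec, dotProduct, Fin.sum_univ_one, Matrix.of_apply, mul_one]
    simp [hD, hσvec, Matrix.diagonal_apply, ite_mul, Finset.sum_ite_eq]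
  have hx0 : ∀ k, Matrix.mulVec (D * Ψ) pg k = d k * S k := by
    intro k; simpa [Matrix.mulVec, dotProduct] using hrow k
  simp only [hx0, hx1]
  have hfin : ∀ (b : Fin 1),
      (((Matrix.of fun (x : Fin 1) (j : Fin K) => 1 / Pmax * ∑ k : Fin K, (D * Ψ) k j) *ᵥ pg) b +
        ((Matrix.of fun (x x : Fin 1) => 1 / Pmax * ∑ k : Fin K, (D *ᵥ σvec) k) *ᵥ fun x => (1:ℝ)) b)
      = 1 / Pmax * ∑ k, d k * (S k + σsq) := by
    intro b
    simp only [Matrix.mulVec, dotProduct, Matrix.of_apply, Fin.sum_univ_one, mul_one]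
    have h1 : ∀ j, (1 / Pmax * ∑ k, (D * Ψ) k j) * pg j
        = 1 / Pmax * ∑ k, (D * Ψ) k j * pg j := by
      intro j; rw [mul_assoc, Finset.sum_mul]
    have h2 : ∀ k : Fin K, ∑ x, D k x * σvec x = d k * σsq := by
      intro k
      simp [hD, hσvec, Matrix.diagonal_apply, ite_mul, Finset.sum_ite_eq]
    simp_rw [h1, h2, ← Finset.mul_sum]
    rw [Finset.sum_comm]
    simp_rw [hrow]
    rw [← mul_add, ← Finset.sum_add_distrib]
    congr 1
    exact Finset.sum_congr rfl fun k _ => by ring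
  simp only [hfin]
  have hk_iff : ∀ k, (d k * S k + d k * σsq = 1 / C * pg k) ↔
      groupSINR H U V σsq pg k / γ k = C := by
    intro k
    have hdk := hdenpos k
    have hFk := (hF k).ne'
    have hγk := (hγ k).ne'
    have hLk := (hLpos k).ne'
    have eL : (d k * S k + d k * σsq = 1 / C * pg k) ↔
        (L k : ℝ) ^ 2 * γ k * (S k + σsq) * C
          = pg k * frobNormSq ((V k)ᴴ * (H k)ᴴ * U k) := by
      rw [← mul_add]
      simp only [hd]
      rw [div_mul_eq_mul_div, show (1:ℝ) / C * pg k = pg k / C by ring,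
        div_eq_div_iff hFk hC.ne']
    have eR : (groupSINR H U V σsq pg k / γ k = C) ↔
        pg k * frobNormSq ((V k)ᴴ * (H k)ᴴ * U k)
          = C * ((S k + σsq) * γ k) * (L k : ℝ) ^ 2 := by
      unfold groupSINR
      rw [div_div, div_eq_iff (mul_pos hdk (hγ k)).ne', div_mul_eq_mul_div,
        div_eq_iff (pow_ne_zero 2 hLk)]
    refine eL.trans (Iff.trans ?_ eR.symm)
    constructor <;> intro h <;> linear_combination -h
  constructor
  · rintro ⟨h1, h2⟩
    have h2' := h2 0
    have hsum : ∑ k, d k * (S k + σsq) = ∑ k, 1 / C * pg k :=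
      Finset.sum_congr rfl fun k _ => (mul_add _ _ _).trans (h1 k)
    refine ⟨?_, fun k => (hk_iff k).mp (h1 k)⟩
    rw [hsum, ← Finset.mul_sum, mul_one] at h2'
    field_simp at h2'
    exact h2'
  · rintro ⟨hsum, hbal⟩
    have h1 : ∀ k, d k * S k + d k * σsq = 1 / C * pg k :=
      fun k => (hk_iff k).mpr (hbal k)
    refine ⟨h1, fun b => ?_⟩
    have hss : ∑ k, d k * (S k + σsq) = 1 / C * Pmax := by
      rw [← hsum, Finset.mul_sum]
      exact Finset.sum_congr rfl fun k _ => (mul_add _ _ _).trans (h1 k)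
    rw [hss, mul_one]
    field_simp
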